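/- If an abelian group G has finite injective rank, then G is relatively co-Hopfian. -/

import Mathlib

/-- An abelian group `G` has *finite injective rank* if an endomorphism `φ` of `G`
is injective exactly when the quotient `G / φ(G)` is finite. -/
def FiniteInjectiveRank (G : Type*) [AddCommGroup G] : Prop :=
  ∀ φ : G →+ G, Function.Injective φ ↔ Finite (G ⧸ φ.range)

/-- An abelian group `G` is *relatively co-Hopfian* if the image of every injective
endomorphism of `G` is an essential subgroup of `G`. -/
def RelativelyCoHopfian (G : Type*) [AddCommGroup G] : Prop :=
  ∀ φ : G →+ G, Function.Injective φ → ∀ B : AddSubgroup G, B ≠ ⊥ → φ.range ⊓ B ≠ ⊥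

/-- The multiplication-by-`n` endomorphism. -/
def nsmulEndo {G : Type*} [AddCommGroup G] (n : ℕ) : G →+ G where
  toFun := fun y => n • y
  map_zero' := smul_zero n
  map_add' := fun a b => smul_add n a b

/-- Key construction: if `G` has finite injective rank, `φ` is an injective endomorphism,
and there is an element `x₀` of order `p ^ (m+1)` such that `p ^ m • x₀ ∉ p ^ (m+1) • G`,
then we can build a non-injective endomorphism of `G` with finite cokernel, contradicting
finite injective rank. -/
theorem aux_caseC {G : Type*} [AddCommGroup G] (h : FiniteInjectiveRank G)
    (φ : G →+ G) (hφ : Function.Injective φ) (p : ℕ) (hp : p.Prime)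
    (x₀ : G) (m : ℕ) (hx : p ^ (m + 1) • x₀ = 0)
    (hnd : ∀ w : G, p ^ m • x₀ ≠ p ^ (m + 1) • w) : False := by
  classical
  set pk : ℕ := p ^ (m + 1) with hpk
  haveI : NeZero pk := ⟨pow_ne_zero _ hp.ne_zero⟩
  -- quotient by the subgroup pk • G
  let P : AddSubgroup G := (nsmulEndo (G := G) pk).range
  let π := QuotientAddGroup.mk' P
  have hπa : p ^ m • (π x₀) ≠ 0 := by
    intro h0
    rw [← map_nsmul] at h0
    obtain ⟨w, hw⟩ := (QuotientAddGroup.eq_zero_iff _).mp h0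
    exact hnd w hw.symm
  obtain ⟨c0, hc⟩ := CharacterModule.exists_character_apply_ne_zero_of_ne_zero hπa
  let c : (G ⧸ P) →+ AddCircle (1 : ℚ) := c0
  let g : G →+ AddCircle (1 : ℚ) := c.comp π
  have hgt : ∀ y : G, pk • g y = 0 := by
    intro y
    have h1 : pk • (π y) = 0 := by
      rw [← map_nsmul]
      exact (QuotientAddGroup.eq_zero_iff _).mpr ⟨y, rfl⟩
    show pk • c (π y) = 0
    rw [← map_nsmul, h1, map_zero]
  set u := g x₀ with hu
  have hu1 : pk • u = 0 := hgt x₀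
  have hu2 : p ^ m • u ≠ 0 := by
    have h2 : p ^ m • u = c (p ^ m • π x₀) := by
      show p ^ m • c (π x₀) = c (p ^ m • π x₀)
      rw [← map_nsmul]
    rw [h2]
    exact hc
  have hordu : addOrderOf u = pk := by
    have hdvd : addOrderOf u ∣ pk := addOrderOf_dvd_iff_nsmul_eq_zero.mpr hu1
    obtain ⟨i, hi, hiu⟩ := (Nat.dvd_prime_pow hp).mp hdvd
    rcases Nat.lt_or_ge i (m + 1) with hlt | hge
    · exfalso
      apply hu2
      have hdvd2 : addOrderOf u ∣ p ^ m := hiu ▸ pow_dvd_pow p (Nat.lt_succ_iff.mp hlt)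
      exact addOrderOf_dvd_iff_nsmul_eq_zero.mp hdvd2
    · have : i = m + 1 := le_antisymm hi hge
      rw [hiu, this]
  -- the cyclic subgroup of `ℚ ⧸ ℤ` of order `pk`
  have hpkQ : (pk : ℚ) ≠ 0 := Nat.cast_ne_zero.mpr (NeZero.ne pk)
  let mkQ : ℚ →+ AddCircle (1 : ℚ) := QuotientAddGroup.mk' (AddSubgroup.zmultiples (1 : ℚ))
  let u₀ : AddCircle (1 : ℚ) := mkQ ((pk : ℚ)⁻¹)
  have hu₀ : (zmultiplesHom _ u₀) ((pk : ℕ) : ℤ) = 0 := by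
    rw [zmultiplesHom_apply, ← map_zsmul]
    apply (QuotientAddGroup.eq_zero_iff _).mpr
    refine ⟨1, ?_⟩
    have h1 : ((pk : ℤ) • ((pk : ℚ)⁻¹) : ℚ) = 1 := by
      rw [zsmul_eq_mul]
      push_cast
      field_simp
    simp [h1]
  let e₀ : ZMod pk →+ AddCircle (1 : ℚ) := ZMod.lift pk ⟨zmultiplesHom _ u₀, hu₀⟩
  have he₀coe : ∀ nn : ℤ, e₀ ((nn : ZMod pk)) = nn • u₀ := by
    intro nn
    rw [ZMod.lift_coe]
    rfl
  have he₀inj : Function.Injective e₀ := by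
    apply (injective_iff_map_eq_zero e₀).mpr
    intro z hz
    obtain ⟨nn, rfl⟩ := ZMod.intCast_surjective z
    rw [he₀coe] at hz
    have hz2 : mkQ (nn • ((pk : ℚ)⁻¹)) = 0 := by rw [map_zsmul]; exact hz
    obtain ⟨t, ht⟩ := (QuotientAddGroup.eq_zero_iff _).mp hz2
    -- ht : t • (1:ℚ) = nn • (pk:ℚ)⁻¹
    simp only [zsmul_eq_mul, mul_one] at ht
    have hnt : (nn : ℚ) = (t : ℚ) * (pk : ℚ) := by
      field_simp at ht
      linarith [ht]
    have hnt2 : nn = t * (pk : ℤ) := by exact_mod_cast hnt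
    rw [hnt2]
    push_cast
    simp [ZMod.natCast_self]
  have hrange : ∀ y : G, g y ∈ e₀.range := by
    intro y
    obtain ⟨q, hq⟩ := QuotientAddGroup.mk'_surjective (AddSubgroup.zmultiples (1 : ℚ)) (g y)
    have h0 : mkQ (pk • q) = 0 := by
      rw [map_nsmul]
      show pk • mkQ q = 0
      rw [show mkQ q = g y from hq]
      exact hgt y
    obtain ⟨t, ht⟩ := (QuotientAddGroup.eq_zero_iff _).mp h0
    -- ht : t • (1:ℚ) = pk • q
    simp only [zsmul_eq_mul, mul_one, nsmul_eq_mul] at ht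
    have hq' : (t : ℚ) * (pk : ℚ)⁻¹ = q := by
      field_simp
      linarith [ht]
    refine ⟨(t : ZMod pk), ?_⟩
    rw [he₀coe]
    calc (t : ℤ) • u₀ = mkQ ((t : ℚ) * (pk : ℚ)⁻¹) := by
          rw [← map_zsmul]
          congr 1
      _ = mkQ q := by rw [hq']
      _ = g y := hq
  let g' : G →+ e₀.range := g.codRestrict e₀.range hrange
  let E := AddMonoidHom.ofInjective he₀inj
  let s : G →+ ZMod pk := E.symm.toAddMonoidHom.comp g'
  have hs : ∀ y : G, e₀ (s y) = g y := by
    intro y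
    have h1 : e₀ (s y) = (E (s y) : AddCircle (1 : ℚ)) :=
      (AddMonoidHom.ofInjective_apply he₀inj (x := s y)).symm
    rw [h1]
    show ((E (E.symm (g' y))) : AddCircle (1 : ℚ)) = g y
    rw [AddEquiv.apply_symm_apply]
    rfl
  have het : e₀ (s x₀) = u := hs x₀
  have hordt : addOrderOf (s x₀) = pk := by
    have := addOrderOf_injective e₀ he₀inj (s x₀)
    rw [het, hordu] at this
    exact this.symm
  have htop : AddSubgroup.zmultiples (s x₀) = ⊤ := by
    apply AddSubgroup.eq_top_of_card_eq
    rw [Nat.card_zmultiples, hordt, Nat.card_zmod]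
  obtain ⟨nn, hnn⟩ : ∃ nn : ℤ, nn • (s x₀) = 1 := by
    have h1 : (1 : ZMod pk) ∈ AddSubgroup.zmultiples (s x₀) := htop ▸ AddSubgroup.mem_top _
    exact AddSubgroup.mem_zmultiples_iff.mp h1
  let σ : G →+ ZMod pk := (AddMonoidHom.mulLeft ((nn : ZMod pk))).comp s
  have hσx : σ x₀ = 1 := by
    show (nn : ZMod pk) * s x₀ = 1
    rw [← zsmul_eq_mul]
    exact hnn
  have hφx₀ : (zmultiplesHom _ (-(φ x₀))) ((pk : ℕ) : ℤ) = 0 := by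
    rw [zmultiplesHom_apply]
    have h1 : pk • φ x₀ = 0 := by rw [← map_nsmul, hx, map_zero]
    rw [smul_neg, natCast_zsmul, h1, neg_zero]
  let ℓ : ZMod pk →+ G := ZMod.lift pk ⟨zmultiplesHom _ (-(φ x₀)), hφx₀⟩
  let θ : G →+ G := φ + ℓ.comp σ
  have hθx : θ x₀ = 0 := by
    show φ x₀ + ℓ (σ x₀) = 0
    rw [hσx]
    have h1 : ℓ (((1 : ℤ) : ZMod pk)) = (1 : ℤ) • (-(φ x₀)) := by
      rw [ZMod.lift_coe]
      rfl
    rw [show (1 : ZMod pk) = (((1 : ℤ)) : ZMod pk) by push_cast; rfl, h1, one_zsmul,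
      add_neg_cancel]
  -- finiteness of the cokernel of θ
  haveI hfinK : Finite (G ⧸ σ.ker) :=
    Finite.of_injective _ (QuotientAddGroup.kerLift_injective σ)
  haveI hQfin : Finite (G ⧸ φ.range) := (h φ).mp hφ
  have hind1 : σ.ker.index ≠ 0 := AddSubgroup.index_ne_zero_of_finite
  have hind2 : φ.range.index ≠ 0 := AddSubgroup.index_ne_zero_of_finite
  have hmaple : AddSubgroup.map φ σ.ker ≤ θ.range := by
    rintro x hx'
    obtain ⟨y, hy, rfl⟩ := hx'
    refine ⟨y, ?_⟩
    show φ y + ℓ (σ y) = φ y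
    simp only [SetLike.mem_coe, AddMonoidHom.mem_ker] at hy
    rw [hy, map_zero, add_zero]
  have hmapind : (AddSubgroup.map φ σ.ker).index ≠ 0 := by
    rw [AddSubgroup.index_map]
    have hker : φ.ker = ⊥ := (AddMonoidHom.ker_eq_bot_iff φ).mpr hφ
    rw [hker, sup_bot_eq]
    exact Nat.mul_ne_zero hind1 hind2
  have hθind : θ.range.index ≠ 0 :=
    ne_zero_of_dvd_ne_zero hmapind (AddSubgroup.index_dvd_of_le hmaple)
  haveI : θ.range.FiniteIndex := ⟨hθind⟩
  have hθfin : Finite (G ⧸ θ.range) := AddSubgroup.finite_quotient_of_finiteIndex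
  have hθinj : Function.Injective θ := (h θ).mpr hθfin
  have hx0 : x₀ = 0 := hθinj (by rw [hθx, map_zero])
  apply hnd 0
  rw [hx0]
  simp

/-- Every abelian group of finite injective rank is relatively co-Hopfian. -/
theorem RelativelyCoHopfian.of_finiteInjectiveRank (G : Type*) [AddCommGroup G]
    (h : FiniteInjectiveRank G) : RelativelyCoHopfian G := by
  intro φ hφ B hBne hbot
  haveI hQfin : Finite (G ⧸ φ.range) := (h φ).mp hφ
  have hmem0 : ∀ x : G, x ∈ φ.range → x ∈ B → x = 0 := by
    intro x h1 h2
    have hx : x ∈ φ.range ⊓ B := ⟨h1, h2⟩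
    rw [hbot] at hx
    exact AddSubgroup.mem_bot.mp hx
  obtain ⟨⟨b, hbB⟩, hbne⟩ := AddSubgroup.ne_bot_iff_exists_ne_zero.mp hBne
  have hb0 : b ≠ 0 := by
    intro hh
    exact hbne (Subtype.ext hh)
  set N := Nat.card (G ⧸ φ.range) with hNdef
  have hN0 : N ≠ 0 := Nat.card_ne_zero.mpr ⟨inferInstance, inferInstance⟩
  have hNb : N • b = 0 := by
    have h2 : (QuotientAddGroup.mk' φ.range) (N • b) = 0 := by
      rw [map_nsmul]
      exact card_nsmul_eq_zero'
    have h3 : N • b ∈ φ.range := (QuotientAddGroup.eq_zero_iff _).mp h2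
    exact hmem0 _ h3 (AddSubgroup.nsmul_mem B hbB N)
  have hfin : IsOfFinAddOrder b :=
    isOfFinAddOrder_iff_nsmul_eq_zero.mpr ⟨N, Nat.pos_of_ne_zero hN0, hNb⟩
  set n := addOrderOf b with hn
  have hn0 : n ≠ 0 := hfin.addOrderOf_pos.ne'
  have hn1 : n ≠ 1 := by
    intro hh
    exact hb0 (AddMonoid.addOrderOf_eq_one_iff.mp hh)
  obtain ⟨p, hp, hpn⟩ := Nat.exists_prime_and_dvd hn1
  set b' := (n / p) • b with hb'
  have hb'B : b' ∈ B := AddSubgroup.nsmul_mem B hbB _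
  have hb'ne : b' ≠ 0 := by
    intro hh
    have hdvd : n ∣ n / p := addOrderOf_dvd_iff_nsmul_eq_zero.mpr hh
    have hlt : n / p < n := Nat.div_lt_self (Nat.pos_of_ne_zero hn0) hp.one_lt
    have hpos : 0 < n / p :=
      Nat.div_pos (Nat.le_of_dvd (Nat.pos_of_ne_zero hn0) hpn) hp.pos
    exact absurd (Nat.le_of_dvd hpos hdvd) (not_le.mpr hlt)
  have hpb' : p • b' = 0 := by
    rw [hb', ← mul_nsmul, Nat.div_mul_cancel hpn]
    exact addOrderOf_nsmul_eq_zero b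
  by_cases hC : ∃ (x : G) (m : ℕ), p ^ (m + 1) • x = 0 ∧ ∀ w : G, p ^ m • x ≠ p ^ (m + 1) • w
  · obtain ⟨x₀, m, hx, hnd⟩ := hC
    exact aux_caseC h φ hφ p hp x₀ m hx hnd
  · push_neg at hC
    have hdiv : ∀ k : ℕ, ∃ w : G, b' = p ^ k • w := by
      intro k
      induction k with
      | zero => exact ⟨b', by simp⟩
      | succ k ih =>
        obtain ⟨w, hw⟩ := ih
        have hxw : p ^ (k + 1) • w = 0 := by
          rw [show p ^ (k + 1) = p ^ k * p from by ring, mul_nsmul, ← hw]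
          exact hpb'
        obtain ⟨w', hw'⟩ := hC w k hxw
        exact ⟨w', by rw [hw, hw']⟩
    set a := N.factorization p with ha
    set r := N / p ^ a with hr
    have hfac : p ^ a * r = N := Nat.ordProj_mul_ordCompl_eq_self N p
    have hpr : ¬ p ∣ r := Nat.not_dvd_ordCompl hp hN0
    obtain ⟨w, hw⟩ := hdiv a
    set π := QuotientAddGroup.mk' φ.range with hπ
    have h1 : r • (π b') = 0 := by
      rw [hw, map_nsmul, ← mul_nsmul, hfac]
      exact card_nsmul_eq_zero'
    have h2 : p • (π b') = 0 := by rw [← map_nsmul, hpb', map_zero]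
    have hcop : IsCoprime (p : ℤ) (r : ℤ) :=
      Nat.isCoprime_iff_coprime.mpr (hp.coprime_iff_not_dvd.mpr hpr)
    obtain ⟨uu, vv, huv⟩ := hcop
    have hπb : π b' = 0 := by
      calc π b' = (1 : ℤ) • π b' := (one_zsmul _).symm
        _ = (uu * (p : ℤ) + vv * (r : ℤ)) • π b' := by rw [huv]
        _ = uu • ((p : ℤ) • π b') + vv • ((r : ℤ) • π b') := by
            rw [add_zsmul, mul_zsmul, mul_zsmul]
        _ = 0 := by
            rw [natCast_zsmul, natCast_zsmul, h1, h2, smul_zero, smul_zero, add_zero]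
    have hmem : b' ∈ φ.range := (QuotientAddGroup.eq_zero_iff _).mp hπb
    exact hb'ne (hmem0 _ hmem hb'B)
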